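/- arXiv:1510.09044 — 2 statements merged into one kernel-verified Lean document; each statement's English description precedes it below -/
import Mathlib

section
/- Let 𝒞 be a strongly connected small category, k a commutative ring, and 𝓕 : 𝒞 → Mod(k) a functor. Then the limit lim 𝓕 exists, and for every object c ∈ 𝒞 the canonical projection φ_c : lim 𝓕 → 𝓕(c) is a monomorphism which induces an isomorphism lim 𝓕 ≅ inv 𝓕(c), where inv 𝓕(c) = { x ∈ 𝓕(c) ∣ for all objects c′ and all pairs of morphisms f₁, f₂ : c → c′, 𝓕(f₁)(x) = 𝓕(f₂)(x) }. -/
open CategoryTheory CategoryTheory.Limits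

namespace Stmt4

variable {k : Type} [CommRing k] {C : Type} [SmallCategory C]

/-- The submodule of "invariant elements" of `𝓕(c)`:
`inv 𝓕(c) = {x ∈ 𝓕(c) ∣ ∀ c', ∀ f₁ f₂ : c ⟶ c', 𝓕(f₁)(x) = 𝓕(f₂)(x)}`. -/
def inv (F : C ⥤ ModuleCat.{0} k) (c : C) : Submodule k (F.obj c) where
  carrier := {x | ∀ (c' : C) (f₁ f₂ : c ⟶ c'), F.map f₁ x = F.map f₂ x}
  add_mem' {a b} ha hb c' f₁ f₂ := by simp [map_add, ha c' f₁ f₂, hb c' f₁ f₂]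
  zero_mem' c' f₁ f₂ := by simp
  smul_mem' r a ha c' f₁ f₂ := by simp [map_smul, ha c' f₁ f₂]

end Stmt4

open Stmt4 in
/-- Let `𝒞` be a strongly connected small category (all hom-sets are
nonempty), `k` a commutative ring, and `𝓕 : 𝒞 ⥤ Mod(k)`. Then the limit of `𝓕` exists, and
for every `c` the canonical projection `φ_c : lim 𝓕 → 𝓕(c)` is a monomorphism whose range is
exactly the submodule `inv 𝓕(c)` of invariant elements; thus it induces an isomorphism
`lim 𝓕 ≅ inv 𝓕(c)`. -/
theorem limit_of_stronglyConnected
    (k : Type) [CommRing k] (C : Type) [SmallCategory C]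
    (hconn : ∀ c c' : C, Nonempty (c ⟶ c'))
    (F : C ⥤ ModuleCat.{0} k) :
    HasLimit F ∧
    ∀ c : C, Mono (limit.π F c) ∧
      LinearMap.range (limit.π F c).hom = inv F c := by
  refine ⟨inferInstance, fun c => ?_⟩
  have inj : Function.Injective (limit.π F c) := by
    intro x y h
    refine Concrete.limit_ext F x y fun j => ?_
    obtain ⟨f⟩ := hconn c j
    rw [← limit.w F f, comp_apply, comp_apply]
    exact congrArg (F.map f) h
  refine ⟨(ModuleCat.mono_iff_injective _).mpr inj, le_antisymm ?_ ?_⟩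
  · rintro _ ⟨z, rfl⟩ c' f₁ f₂
    have h₁ := ConcreteCategory.congr_hom (limit.w F f₁) z
    have h₂ := ConcreteCategory.congr_hom (limit.w F f₂) z
    simp only [comp_apply] at h₁ h₂
    exact h₁.trans h₂.symm
  · intro x hx
    let s : Cone F :=
      { pt := ModuleCat.of k (inv F c)
        π :=
          { app := fun c' => ModuleCat.ofHom ((F.map (hconn c c').some).hom ∘ₗ (inv F c).subtype)
            naturality := fun c' c'' g => by
              ext y
              have := y.2 c'' ((hconn c c').some ≫ g) (hconn c c'').some
              show (F.map (hconn c c'').some).hom y.1 = (F.map g).hom ((F.map (hconn c c').some).hom y.1)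
              rw [← this, F.map_comp]
              rfl } }
    refine ⟨limit.lift F s ⟨x, hx⟩, ?_⟩
    have h := ConcreteCategory.congr_hom (limit.lift_π s c) (⟨x, hx⟩ : inv F c)
    have h2 : (limit.π F c).hom ((limit.lift F s).hom ⟨x, hx⟩) = (F.map (hconn c c).some).hom x := h
    rw [h2, hx c (hconn c c).some (𝟙 c), F.map_id]
    rfl
end

section
/- Let 𝒞 be a small category with pairwise coproducts, k a commutative ring, and 𝓕 : 𝒞 → Mod(k) a representation. Let sq : 𝒞 → 𝒞 be the functor c ↦ c ⊔ c and let i₁, i₂ : Id_𝒞 → sq be the natural transformations given by the two coproduct coprojections c → c ⊔ c. Then for every n ≥ 0 and k ∈ {1,2}, the induced homomorphism (i_k)_* : limⁿ 𝓕 → limⁿ (𝓕 ∘ sq) is an isomorphism. -/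
open CategoryTheory CategoryTheory.Limits

namespace Stmt6

variable (k : Type) [CommRing k] (C : Type) [SmallCategory C]

noncomputable instance limAdditive :
    (lim : (C ⥤ ModuleCat.{0} k) ⥤ ModuleCat.{0} k).Additive :=
  Functor.additive_of_preserves_binary_products _

/-- The `n`-th derived limit over `𝒞` of a representation `𝓕 : 𝒞 ⥤ Mod(k)`. -/
noncomputable def limN [HasInjectiveResolutions (C ⥤ ModuleCat.{0} k)]
    (n : ℕ) (F : C ⥤ ModuleCat.{0} k) : ModuleCat.{0} k :=
  ((lim : (C ⥤ ModuleCat.{0} k) ⥤ ModuleCat.{0} k).rightDerived n).obj F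

variable {C} [HasBinaryCoproducts C]

/-- The functor `sq : 𝒞 ⥤ 𝒞`, `c ↦ c ⊔ c`. -/
@[simps]
noncomputable def sq : C ⥤ C where
  obj c := c ⨿ c
  map f := coprod.map f f

/-- The natural transformation `i₁ : Id ⟶ sq` given by the first coprojection
`c → c ⊔ c`. -/
@[simps]
noncomputable def i₁ : 𝟭 C ⟶ sq where
  app c := coprod.inl
  naturality _ _ f := (coprod.inl_map f f).symm

/-- The natural transformation `i₂ : Id ⟶ sq` given by the second coprojection
`c → c ⊔ c`. -/
@[simps]
noncomputable def i₂ : 𝟭 C ⟶ sq where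
  app c := coprod.inr
  naturality _ _ f := (coprod.inr_map f f).symm

variable {k}

/-- The morphism of representations `𝓕 ⟶ 𝓕 ∘ sq` induced by a natural transformation
`Id ⟶ sq`. -/
noncomputable def indMap (F : C ⥤ ModuleCat.{0} k) (i : 𝟭 C ⟶ sq) : F ⟶ sq ⋙ F :=
  F.leftUnitor.inv ≫ Functor.whiskerRight i F

end Stmt6

namespace Stmt6Aux

open Stmt6

variable {k : Type} [CommRing k] {C : Type} [SmallCategory C] [HasBinaryCoproducts C]

/-- Precomposition with `sq`, as a functor on representations. -/
noncomputable abbrev W (k : Type) [CommRing k] (C : Type) [SmallCategory C]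
    [HasBinaryCoproducts C] : (C ⥤ ModuleCat.{0} k) ⥤ (C ⥤ ModuleCat.{0} k) :=
  (Functor.whiskeringLeft C C (ModuleCat.{0} k)).obj sq

instance : (W k C).Additive :=
  ⟨by intros; ext c : 2; simp⟩

lemma indMap_naturality {X Y : C ⥤ ModuleCat.{0} k} (φ : X ⟶ Y) (i : 𝟭 C ⟶ sq) :
    indMap X i ≫ Functor.whiskerLeft sq φ = φ ≫ indMap Y i := by
  ext c
  simpa [indMap] using φ.naturality (i.app c)

/-- The crucial elementary fact: the two coprojections induce the same map on `lim`,
because the components of a cone are compatible along both `inl` and `inr`. -/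
lemma lim_map_indMap_eq (X : C ⥤ ModuleCat.{0} k) :
    (lim : (C ⥤ ModuleCat.{0} k) ⥤ ModuleCat.{0} k).map (indMap X i₁) =
      (lim : (C ⥤ ModuleCat.{0} k) ⥤ ModuleCat.{0} k).map (indMap X i₂) := by
  apply limit.hom_ext
  intro c
  have h₁ := limit.w X (coprod.inl : c ⟶ c ⨿ c)
  have h₂ := limit.w X (coprod.inr : c ⟶ c ⨿ c)
  simp only [lim_map, limMap_π, indMap, Iso.symm_hom, Functor.leftUnitor_inv_app,
    NatTrans.comp_app, Functor.whiskerRight_app, i₁_app, i₂_app, Category.id_comp]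
  exact h₁.trans h₂.symm

section Key

variable {G : C ⥤ ModuleCat.{0} k}

/-- `sq*` applied degreewise to an injective resolution of `G`:
an exact (but not injective) resolution of `sq ⋙ G`. -/
noncomputable abbrev EC (P : InjectiveResolution G) :
    CochainComplex (C ⥤ ModuleCat.{0} k) ℕ :=
  ((W k C).mapHomologicalComplex (ComplexShape.up ℕ)).obj P.cocomplex

noncomputable instance : (W k C).PreservesMonomorphisms :=
  CategoryTheory.preservesMonomorphisms_of_preservesLimitsOfShape _

/-- `sq*` applied to the augmentation `P.ι.f 0`, with its source and target fixed. -/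
noncomputable def wι (P : InjectiveResolution G) :
    ((CochainComplex.single₀ (C ⥤ ModuleCat.{0} k)).obj (sq ⋙ G)).X 0 ⟶ (EC P).X 0 :=
  (W k C).map (P.ι.f 0)

instance monoWmap (P : InjectiveResolution G) : Mono (wι P) := by
  have : Mono (P.ι.f 0) := inferInstance
  exact Functor.map_mono (W k C) (P.ι.f 0)

/-- A comparison map from the exact resolution `sq* P` to an injective resolution `Q`
of `sq ⋙ G`, lifting the identity. -/
noncomputable def uLift (P : InjectiveResolution G)
    (Q : InjectiveResolution (sq ⋙ G)) : EC P ⟶ Q.cocomplex :=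
  CochainComplex.mkHom (EC P) Q.cocomplex
    (Injective.factorThru (Q.ι.f 0) (wι P))
    ((P.exact₀.map (W k C)).descToInjective
      ((Injective.factorThru (Q.ι.f 0) (wι P) : (EC P).X 0 ⟶ _) ≫ Q.cocomplex.d 0 1)
      (by
        refine (Category.assoc _ _ _).symm.trans ?_
        show (wι P ≫
          Injective.factorThru (Q.ι.f 0) (wι P)) ≫ Q.cocomplex.d 0 1 = 0
        rw [Injective.comp_factorThru, Q.ι_f_zero_comp_complex_d]))
    ((P.exact₀.map (W k C)).comp_descToInjective _ _).symm
    (fun n p =>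
      ⟨((P.exact_succ n).map (W k C)).descToInjective
          (p.2.1 ≫ Q.cocomplex.d (n + 1) (n + 2))
          (by
            refine (Category.assoc _ _ _).symm.trans ?_
            show ((EC P).d n (n + 1) ≫ p.2.1) ≫ Q.cocomplex.d (n + 1) (n + 2) = 0
            rw [← p.2.2, Category.assoc, Q.cocomplex.d_comp_d, Limits.comp_zero]),
        (((P.exact_succ n).map (W k C)).comp_descToInjective _ _).symm⟩)

/-- The degreewise map `P ⟶ sq* P` induced by a coprojection. -/
noncomputable def tMap (P : InjectiveResolution G) (i : 𝟭 C ⟶ sq) :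
    P.cocomplex ⟶ EC P where
  f m := indMap (P.cocomplex.X m) i
  comm' m m' _ := indMap_naturality (P.cocomplex.d m m') i

lemma key_w (P : InjectiveResolution G) (Q : InjectiveResolution (sq ⋙ G))
    (i : 𝟭 C ⟶ sq) :
    P.ι ≫ (tMap P i ≫ uLift P Q) =
      (CochainComplex.single₀ (C ⥤ ModuleCat.{0} k)).map (indMap G i) ≫ Q.ι := by
  apply (CochainComplex.fromSingle₀Equiv Q.cocomplex _).injective
  apply Subtype.ext
  simp only [CochainComplex.fromSingle₀Equiv_apply_coe, HomologicalComplex.comp_f]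
  rw [CochainComplex.single₀_map_f_zero]
  show P.ι.f 0 ≫ (tMap P i).f 0 ≫ (uLift P Q).f 0 = indMap G i ≫ Q.ι.f 0
  have hn : P.ι.f 0 ≫ indMap (P.cocomplex.X 0) i =
      indMap G i ≫ Functor.whiskerLeft sq (P.ι.f 0) :=
    (indMap_naturality (P.ι.f 0) i).symm
  have hu : (uLift P Q).f 0 =
      Injective.factorThru (Q.ι.f 0) (wι P) := rfl
  erw [show (tMap P i).f 0 = indMap (P.cocomplex.X 0) i from rfl, ← Category.assoc, hn,
    Category.assoc, hu]
  erw [show Functor.whiskerLeft sq (P.ι.f 0) = wι P from rfl,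
    Injective.comp_factorThru]
  rfl

/-- **Key lemma**: the two coprojections induce equal maps on all derived limits. -/
lemma key [HasInjectiveResolutions (C ⥤ ModuleCat.{0} k)]
    (G : C ⥤ ModuleCat.{0} k) (n : ℕ) :
    ((lim : (C ⥤ ModuleCat.{0} k) ⥤ ModuleCat.{0} k).rightDerived n).map (indMap G i₁) =
      ((lim : (C ⥤ ModuleCat.{0} k) ⥤ ModuleCat.{0} k).rightDerived n).map
        (indMap G i₂) := by
  let P : InjectiveResolution G := injectiveResolution G
  let Q : InjectiveResolution (sq ⋙ G) := injectiveResolution (sq ⋙ G)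
  rw [Functor.rightDerived_map_eq _ n (indMap G i₁) (tMap P i₁ ≫ uLift P Q)
      (key_w P Q i₁),
    Functor.rightDerived_map_eq _ n (indMap G i₂) (tMap P i₂ ≫ uLift P Q)
      (key_w P Q i₂)]
  have hmap :
      ((lim : (C ⥤ ModuleCat.{0} k) ⥤ ModuleCat.{0} k).mapHomologicalComplex
          (ComplexShape.up ℕ)).map (tMap P i₁ ≫ uLift P Q) =
        ((lim : (C ⥤ ModuleCat.{0} k) ⥤ ModuleCat.{0} k).mapHomologicalComplex
          (ComplexShape.up ℕ)).map (tMap P i₂ ≫ uLift P Q) := by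
    ext m
    simp only [Functor.mapHomologicalComplex_map_f, HomologicalComplex.comp_f]
    rw [Functor.map_comp, Functor.map_comp,
      show (tMap P i₁).f m = indMap (P.cocomplex.X m) i₁ from rfl,
      show (tMap P i₂).f m = indMap (P.cocomplex.X m) i₂ from rfl]
    erw [lim_map_indMap_eq]
    rfl
  simp only [Functor.comp_map]
  rw [hmap]

end Key

section Assembly

variable (F : C ⥤ ModuleCat.{0} k)

/-- The fold natural transformation `sq ⟶ 𝟭`. -/
@[simps]
noncomputable def nabla : (sq : C ⥤ C) ⟶ 𝟭 C where
  app c := coprod.desc (𝟙 c) (𝟙 c)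
  naturality c c' f := by
    apply coprod.hom_ext <;> simp [Stmt6.sq]

/-- The retraction `sq ⋙ F ⟶ F` induced by the fold maps. -/
noncomputable def fold : sq ⋙ F ⟶ F :=
  Functor.whiskerRight (nabla (C := C)) F ≫ F.leftUnitor.hom

/-- An auxiliary natural transformation `sq ⋙ sq ⟶ sq`. -/
@[simps]
noncomputable def gam₁ : (sq : C ⥤ C) ⋙ sq ⟶ sq where
  app c := coprod.desc (coprod.desc coprod.inl coprod.inl)
    (coprod.desc coprod.inr coprod.inl)
  naturality c c' f := by
    show (coprod.map (coprod.map f f) (coprod.map f f) ≫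
        coprod.desc (coprod.desc coprod.inl coprod.inl) (coprod.desc coprod.inr coprod.inl) : (c ⨿ c) ⨿ (c ⨿ c) ⟶ c' ⨿ c') =
      (coprod.desc (coprod.desc coprod.inl coprod.inl) (coprod.desc coprod.inr coprod.inl) ≫
          coprod.map f f : (c ⨿ c) ⨿ (c ⨿ c) ⟶ c' ⨿ c')
    apply coprod.hom_ext <;> apply coprod.hom_ext <;> simp [coprod.inl_desc, coprod.inr_desc, coprod.inl_desc_assoc, coprod.inr_desc_assoc]

/-- An auxiliary natural transformation `sq ⋙ sq ⟶ sq`. -/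
@[simps]
noncomputable def gam₂ : (sq : C ⥤ C) ⋙ sq ⟶ sq where
  app c := coprod.desc (coprod.desc coprod.inr coprod.inl)
    (coprod.desc coprod.inr coprod.inr)
  naturality c c' f := by
    show (coprod.map (coprod.map f f) (coprod.map f f) ≫
        coprod.desc (coprod.desc coprod.inr coprod.inl) (coprod.desc coprod.inr coprod.inr) : (c ⨿ c) ⨿ (c ⨿ c) ⟶ c' ⨿ c') =
      (coprod.desc (coprod.desc coprod.inr coprod.inl) (coprod.desc coprod.inr coprod.inr) ≫
          coprod.map f f : (c ⨿ c) ⨿ (c ⨿ c) ⟶ c' ⨿ c')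
    apply coprod.hom_ext <;> apply coprod.hom_ext <;> simp [coprod.inl_desc, coprod.inr_desc, coprod.inl_desc_assoc, coprod.inr_desc_assoc]

/-- The auxiliary map `sq ⋙ (sq ⋙ F) ⟶ sq ⋙ F` induced by `gam₁`. -/
@[simps]
noncomputable def Gm₁ : sq ⋙ (sq ⋙ F) ⟶ sq ⋙ F where
  app c := F.map ((gam₁ (C := C)).app c)
  naturality c c' f := by
    dsimp
    rw [← F.map_comp, ← F.map_comp]
    congr 1
    exact (gam₁ (C := C)).naturality f

/-- The auxiliary map `sq ⋙ (sq ⋙ F) ⟶ sq ⋙ F` induced by `gam₂`. -/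
@[simps]
noncomputable def Gm₂ : sq ⋙ (sq ⋙ F) ⟶ sq ⋙ F where
  app c := F.map ((gam₂ (C := C)).app c)
  naturality c c' f := by
    dsimp
    rw [← F.map_comp, ← F.map_comp]
    congr 1
    exact (gam₂ (C := C)).naturality f

lemma rel1 : indMap F i₁ ≫ fold F = 𝟙 F := by
  refine NatTrans.ext (funext fun c => ?_)
  show (𝟙 (F.obj c) ≫ F.map (coprod.inl : c ⟶ c ⨿ c)) ≫
      (F.map (coprod.desc (𝟙 c) (𝟙 c)) ≫ 𝟙 (F.obj c)) = 𝟙 (F.obj c)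
  simp only [Category.id_comp, Category.comp_id]
  rw [← F.map_comp, coprod.inl_desc, F.map_id]

lemma rel2 : indMap F i₂ ≫ fold F = 𝟙 F := by
  refine NatTrans.ext (funext fun c => ?_)
  show (𝟙 (F.obj c) ≫ F.map (coprod.inr : c ⟶ c ⨿ c)) ≫
      (F.map (coprod.desc (𝟙 c) (𝟙 c)) ≫ 𝟙 (F.obj c)) = 𝟙 (F.obj c)
  simp only [Category.id_comp, Category.comp_id]
  rw [← F.map_comp, coprod.inr_desc, F.map_id]

lemma rel3 : indMap (sq ⋙ F) i₁ ≫ Gm₁ F = 𝟙 (sq ⋙ F) := by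
  refine NatTrans.ext (funext fun c => ?_)
  show (𝟙 (F.obj (c ⨿ c)) ≫
      F.map (coprod.map (coprod.inl : c ⟶ c ⨿ c) coprod.inl)) ≫
      F.map ((gam₁ (C := C)).app c) = 𝟙 (F.obj (c ⨿ c))
  simp only [Category.id_comp]
  erw [← F.map_comp,
    show coprod.map (coprod.inl : c ⟶ c ⨿ c) coprod.inl ≫ (gam₁ (C := C)).app c =
      𝟙 (c ⨿ c) from by
        show (coprod.map (coprod.inl : c ⟶ c ⨿ c) coprod.inl ≫ coprod.desc (coprod.desc (coprod.inl : c ⟶ c ⨿ c) coprod.inl) (coprod.desc (coprod.inr : c ⟶ c ⨿ c) coprod.inl) : c ⨿ c ⟶ c ⨿ c) = _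
        apply coprod.hom_ext <;> simp [coprod.inl_desc, coprod.inr_desc, coprod.inl_desc_assoc, coprod.inr_desc_assoc],
    F.map_id]

lemma rel3' : indMap (sq ⋙ F) i₂ ≫ Gm₂ F = 𝟙 (sq ⋙ F) := by
  refine NatTrans.ext (funext fun c => ?_)
  show (𝟙 (F.obj (c ⨿ c)) ≫
      F.map (coprod.map (coprod.inr : c ⟶ c ⨿ c) coprod.inr)) ≫
      F.map ((gam₂ (C := C)).app c) = 𝟙 (F.obj (c ⨿ c))
  simp only [Category.id_comp]
  erw [← F.map_comp,
    show coprod.map (coprod.inr : c ⟶ c ⨿ c) coprod.inr ≫ (gam₂ (C := C)).app c =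
      𝟙 (c ⨿ c) from by
        show (coprod.map (coprod.inr : c ⟶ c ⨿ c) coprod.inr ≫ coprod.desc (coprod.desc (coprod.inr : c ⟶ c ⨿ c) coprod.inl) (coprod.desc (coprod.inr : c ⟶ c ⨿ c) coprod.inr) : c ⨿ c ⟶ c ⨿ c) = _
        apply coprod.hom_ext <;> simp [coprod.inl_desc, coprod.inr_desc, coprod.inl_desc_assoc, coprod.inr_desc_assoc],
    F.map_id]

lemma rel4 : fold F ≫ indMap F i₁ = indMap (sq ⋙ F) i₂ ≫ Gm₁ F := by
  refine NatTrans.ext (funext fun c => ?_)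
  show (F.map (coprod.desc (𝟙 c) (𝟙 c)) ≫ 𝟙 (F.obj c)) ≫
      (𝟙 (F.obj c) ≫ F.map (coprod.inl : c ⟶ c ⨿ c)) =
    (𝟙 (F.obj (c ⨿ c)) ≫
      F.map (coprod.map (coprod.inr : c ⟶ c ⨿ c) coprod.inr)) ≫
      F.map ((gam₁ (C := C)).app c)
  simp only [Category.id_comp, Category.comp_id]
  erw [← F.map_comp, ← F.map_comp,
    show coprod.desc (𝟙 c) (𝟙 c) ≫ (coprod.inl : c ⟶ c ⨿ c) =
      coprod.map (coprod.inr : c ⟶ c ⨿ c) coprod.inr ≫ (gam₁ (C := C)).app c from by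
        show _ = (coprod.map (coprod.inr : c ⟶ c ⨿ c) coprod.inr ≫ coprod.desc (coprod.desc (coprod.inl : c ⟶ c ⨿ c) coprod.inl) (coprod.desc (coprod.inr : c ⟶ c ⨿ c) coprod.inl) : c ⨿ c ⟶ c ⨿ c)
        apply coprod.hom_ext <;> simp [coprod.inl_desc, coprod.inr_desc, coprod.inl_desc_assoc, coprod.inr_desc_assoc]]
  rfl

lemma rel4' : fold F ≫ indMap F i₂ = indMap (sq ⋙ F) i₁ ≫ Gm₂ F := by
  refine NatTrans.ext (funext fun c => ?_)
  show (F.map (coprod.desc (𝟙 c) (𝟙 c)) ≫ 𝟙 (F.obj c)) ≫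
      (𝟙 (F.obj c) ≫ F.map (coprod.inr : c ⟶ c ⨿ c)) =
    (𝟙 (F.obj (c ⨿ c)) ≫
      F.map (coprod.map (coprod.inl : c ⟶ c ⨿ c) coprod.inl)) ≫
      F.map ((gam₂ (C := C)).app c)
  simp only [Category.id_comp, Category.comp_id]
  erw [← F.map_comp, ← F.map_comp,
    show coprod.desc (𝟙 c) (𝟙 c) ≫ (coprod.inr : c ⟶ c ⨿ c) =
      coprod.map (coprod.inl : c ⟶ c ⨿ c) coprod.inl ≫ (gam₂ (C := C)).app c from by
        show _ = (coprod.map (coprod.inl : c ⟶ c ⨿ c) coprod.inl ≫ coprod.desc (coprod.desc (coprod.inr : c ⟶ c ⨿ c) coprod.inl) (coprod.desc (coprod.inr : c ⟶ c ⨿ c) coprod.inr) : c ⨿ c ⟶ c ⨿ c)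
        apply coprod.hom_ext <;> simp [coprod.inl_desc, coprod.inr_desc, coprod.inl_desc_assoc, coprod.inr_desc_assoc]]
  rfl

end Assembly

end Stmt6Aux

open Stmt6 in
/-- Let `𝒞` be a small category with pairwise coproducts and
`𝓕 : 𝒞 ⥤ Mod(k)` a representation. Then for every `n ≥ 0` and `k ∈ {1,2}`, the map
`(i_k)_* : limⁿ 𝓕 → limⁿ (𝓕 ∘ sq)` induced by the coprojections `i_k : c → c ⊔ c` is an
isomorphism. -/
theorem isIso_limN_map_coproj
    (k : Type) [CommRing k] (C : Type) [SmallCategory C] [HasBinaryCoproducts C]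
    [HasInjectiveResolutions (C ⥤ ModuleCat.{0} k)]
    (F : C ⥤ ModuleCat.{0} k) (n : ℕ) :
    IsIso (((lim : (C ⥤ ModuleCat.{0} k) ⥤ ModuleCat.{0} k).rightDerived n).map
        (indMap F i₁)) ∧
    IsIso (((lim : (C ⥤ ModuleCat.{0} k) ⥤ ModuleCat.{0} k).rightDerived n).map
        (indMap F i₂)) := by
  set RD := (lim : (C ⥤ ModuleCat.{0} k) ⥤ ModuleCat.{0} k).rightDerived n with hRD
  constructor
  · refine ⟨RD.map (Stmt6Aux.fold F), ?_, ?_⟩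
    · rw [← RD.map_comp, Stmt6Aux.rel1, RD.map_id]
    · rw [← RD.map_comp, Stmt6Aux.rel4, RD.map_comp, hRD,
        ← Stmt6Aux.key (sq ⋙ F) n, ← Functor.map_comp, Stmt6Aux.rel3,
        CategoryTheory.Functor.map_id]
  · refine ⟨RD.map (Stmt6Aux.fold F), ?_, ?_⟩
    · rw [← RD.map_comp, Stmt6Aux.rel2, RD.map_id]
    · rw [← RD.map_comp, Stmt6Aux.rel4', RD.map_comp, hRD,
        Stmt6Aux.key (sq ⋙ F) n, ← Functor.map_comp, Stmt6Aux.rel3',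
        CategoryTheory.Functor.map_id]
end
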